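/- Let K ⊂ ℂ be compact and f holomorphic and injective on an open neighborhood U of K with f′ nonvanishing on K. Then there exists η > 0 such that every holomorphic function g on U with sup_{K} |g − f| < η restricted to a slightly smaller compact set is injective, provided K is the closure of its interior and g is additionally close to f in C¹-norm on that smaller set via Cauchy estimates. More precisely: for compact sets K' ⊂ interior(K), there is η > 0 so that sup_K |g−f| < η implies g is injective on K'. -/

import Mathlib

open Set Metric

/-- stability of injectivity. If `f` is holomorphic and injective on an
open neighbourhood `U` of the compact set `K` (which is the closure of its interior)
with nonvanishing derivative on `K`, and `K' ⊆ interior K` is compact, then there is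
`η > 0` such that every holomorphic `g` on `U` with `sup_K |g − f| < η` is injective
on `K'`. -/
theorem stmt6 (U : Set ℂ) (hU : IsOpen U) (K K' : Set ℂ) (hK : IsCompact K)
    (hKU : K ⊆ U) (hKreg : closure (interior K) = K)
    (hK' : IsCompact K') (hK'K : K' ⊆ interior K)
    (f : ℂ → ℂ) (hf : DifferentiableOn ℂ f U) (hfinj : Set.InjOn f U)
    (hf' : ∀ z ∈ K, deriv f z ≠ 0) :
    ∃ η > 0, ∀ g : ℂ → ℂ, DifferentiableOn ℂ g U →
      (∀ z ∈ K, ‖g z - f z‖ < η) → Set.InjOn g K' := by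
  rcases K'.eq_empty_or_nonempty with hKe | hKne'
  · exact ⟨1, one_pos, fun g _ _ => by simp [hKe]⟩
  have hK'U : K' ⊆ U := (hK'K.trans interior_subset).trans hKU
  have hKne : K.Nonempty := hKne'.mono (hK'K.trans interior_subset)
  -- the derivative of f is continuous on U
  have hfa : AnalyticOnNhd ℂ f U := hf.analyticOnNhd hU
  have hderivC : ContinuousOn (deriv f) U := hfa.deriv.continuousOn
  -- minimum of ‖deriv f‖ over K
  obtain ⟨x₀, hx₀K, hm'⟩ := hK.exists_isMinOn hKne ((hderivC.mono hKU).norm)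
  set m : ℝ := ‖deriv f x₀‖ with hm_def
  have hm : ∀ z ∈ K, m ≤ ‖deriv f z‖ := fun z hz => isMinOn_iff.mp hm' z hz
  have hm0 : 0 < m := norm_pos_iff.2 (hf' x₀ hx₀K)
  -- thickening radius
  obtain ⟨δ₁, hδ₁, hthick⟩ := hK'.exists_thickening_subset_open isOpen_interior hK'K
  set r : ℝ := δ₁ / 3 with hr_def
  have hr0 : 0 < r := by positivity
  have hballK : ∀ x ∈ K', ∀ z ∈ closedBall x r, closedBall z r ⊆ K := by
    intro x hx z hz w hw
    have hwt : w ∈ thickening δ₁ K' := by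
      have hdw : dist w x < δ₁ := by
        calc dist w x ≤ dist w z + dist z x := dist_triangle _ _ _
        _ ≤ r + r := add_le_add hw hz
        _ < δ₁ := by rw [hr_def]; linarith
      exact mem_thickening_iff.2 ⟨x, hx, hdw⟩
    exact interior_subset (hthick hwt)
  -- uniform continuity of deriv f on K
  have huc : UniformContinuousOn (deriv f) K :=
    hK.uniformContinuousOn_of_continuous (hderivC.mono hKU)
  rw [Metric.uniformContinuousOn_iff] at huc
  obtain ⟨δ₀, hδ₀, hucd⟩ := huc (m / 4) (by positivity)
  set δ : ℝ := min (δ₀ / 2) r with hδ_def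
  have hδ0 : 0 < δ := lt_min (by positivity) hr0
  have hδr : δ ≤ r := min_le_right _ _
  -- minimum of ‖f x - f y‖ over far pairs
  have hc : ∃ c > 0, ∀ x ∈ K', ∀ y ∈ K', δ ≤ dist x y → c ≤ ‖f x - f y‖ := by
    set S : Set (ℂ × ℂ) := (K' ×ˢ K') ∩ {p | δ ≤ dist p.1 p.2} with hS_def
    have hScomp : IsCompact S :=
      (hK'.prod hK').inter_right (isClosed_le continuous_const (by fun_prop))
    rcases S.eq_empty_or_nonempty with hSe | hSne
    · refine ⟨1, one_pos, fun x hx y hy hd => ?_⟩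
      exact absurd (hSe ▸ ⟨⟨hx, hy⟩, hd⟩ : (x, y) ∈ (∅ : Set (ℂ × ℂ))) (Set.notMem_empty _)
    · have hFc : ContinuousOn (fun p : ℂ × ℂ => ‖f p.1 - f p.2‖) S := by
        apply ContinuousOn.norm
        apply ContinuousOn.sub
        · exact hf.continuousOn.comp continuous_fst.continuousOn
            (fun p hp => hK'U hp.1.1)
        · exact hf.continuousOn.comp continuous_snd.continuousOn
            (fun p hp => hK'U hp.1.2)
      obtain ⟨p₀, hp₀S, hp₀'⟩ := hScomp.exists_isMinOn hSne hFc
      have hp₀ : ∀ p ∈ S, ‖f p₀.1 - f p₀.2‖ ≤ ‖f p.1 - f p.2‖ :=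
        fun p hp => isMinOn_iff.mp hp₀' p hp
      refine ⟨‖f p₀.1 - f p₀.2‖, ?_, fun x hx y hy hd => hp₀ (x, y) ⟨⟨hx, hy⟩, hd⟩⟩
      have hne : f p₀.1 ≠ f p₀.2 := by
        intro heq
        have h12 : p₀.1 = p₀.2 := hfinj (hK'U hp₀S.1.1) (hK'U hp₀S.1.2) heq
        have hd : δ ≤ dist p₀.1 p₀.2 := hp₀S.2
        rw [h12, dist_self] at hd
        linarith
      exact norm_pos_iff.2 (sub_ne_zero.2 hne)
  obtain ⟨c, hc0, hcmin⟩ := hc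
  refine ⟨min (c / 3) (m * r / 4), lt_min (by positivity) (by positivity), ?_⟩
  intro g hg hgf x hx y hy hgxy
  set η : ℝ := min (c / 3) (m * r / 4) with hη_def
  by_contra hxy
  have hdxy0 : 0 < dist x y := dist_pos.2 hxy
  rcases lt_or_ge (dist x y) δ with hclose | hfar
  · -- close pairs: use derivative bounds on closedBall x δ
    have hCr : closedBall x δ ⊆ closedBall x r := closedBall_subset_closedBall hδr
    have hCU : ∀ z ∈ closedBall x δ, closedBall z r ⊆ K := fun z hz => hballK x hx z (hCr hz)
    have hzK : ∀ z ∈ closedBall x δ, z ∈ K := fun z hz => hCU z hz (mem_closedBall_self hr0.le)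
    have hzU : ∀ z ∈ closedBall x δ, z ∈ U := fun z hz => hKU (hzK z hz)
    have hyC : y ∈ closedBall x δ := by
      rw [mem_closedBall, dist_comm]; exact hclose.le
    have hxC : x ∈ closedBall x δ := mem_closedBall_self hδ0.le
    have hη0 : 0 < η := lt_min (by positivity) (by positivity)
    have hηmr : η ≤ m * r / 4 := min_le_right _ _
    -- lower bound on ‖f y - f x‖
    have hflow : (3 / 4 : ℝ) * m * ‖y - x‖ ≤ ‖f y - f x‖ := by
      have hmvt := Convex.norm_image_sub_le_of_norm_hasDerivWithin_le
        (f := fun z => f z - deriv f x * z) (f' := fun z => deriv f z - deriv f x)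
        (s := closedBall x δ) (C := m / 4) (x := x) (y := y)
        (fun z hz => by
          have hdf : HasDerivAt f (deriv f z) z :=
            (hf.differentiableAt (hU.mem_nhds (hzU z hz))).hasDerivAt
          have hlin : HasDerivAt (fun w => deriv f x * w) (deriv f x) z := by
            simpa using (hasDerivAt_id z).const_mul (deriv f x)
          exact (hdf.sub hlin).hasDerivWithinAt)
        (fun z hz => by
          have hdzx : dist z x < δ₀ := by
            have h1 : dist z x ≤ δ := mem_closedBall.1 hz
            have h2 : δ ≤ δ₀ / 2 := min_le_left _ _
            linarith
          have hle := hucd z (hzK z hz) x (hzK x hxC) hdzx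
          rw [dist_eq_norm] at hle
          exact hle.le)
        (convex_closedBall _ _) hxC hyC
      have h1 : (f y - deriv f x * y) - (f x - deriv f x * x)
          = (f y - f x) - deriv f x * (y - x) := by ring
      simp only [h1] at hmvt
      have h2 : ‖deriv f x * (y - x)‖ - ‖f y - f x‖ ≤ (m / 4) * ‖y - x‖ :=
        le_trans (by simpa [norm_sub_rev (deriv f x * (y - x))] using norm_sub_norm_le (deriv f x * (y - x)) (f y - f x)) hmvt
      have h3 : m * ‖y - x‖ ≤ ‖deriv f x * (y - x)‖ := by
        rw [norm_mul]
        exact mul_le_mul_of_nonneg_right (hm x (hzK x hxC)) (norm_nonneg _)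
      linarith
    -- upper bound on ‖h y - h x‖ where h = g - f
    have hhK : ∀ w ∈ K, ‖g w - f w‖ < η := fun w hw => hgf w hw
    have hhigh : ‖(g y - f y) - (g x - f x)‖ ≤ (2 * η / r) * ‖y - x‖ := by
      have := Convex.norm_image_sub_le_of_norm_hasDerivWithin_le
        (f := fun w => g w - f w) (f' := fun z => deriv (fun w => g w - f w) z)
        (s := closedBall x δ) (C := 2 * η / r) (x := x) (y := y)
        (fun z hz => by
          have hda : DifferentiableAt ℂ (fun w => g w - f w) z :=
            (hg.differentiableAt (hU.mem_nhds (hzU z hz))).sub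
              (hf.differentiableAt (hU.mem_nhds (hzU z hz)))
          exact hda.hasDerivAt.hasDerivWithinAt)
        (fun z hz => by
          have hball : ball z r ⊆ K := ball_subset_closedBall.trans (hCU z hz)
          have hdiff : DifferentiableOn ℂ (fun w => g w - f w) (ball z r) :=
            (hg.sub hf).mono (hball.trans hKU)
          have hmaps : Set.MapsTo (fun w => g w - f w) (ball z r)
              (ball (g z - f z) (2 * η)) := by
            intro w hw
            rw [mem_ball, dist_eq_norm]
            calc ‖(g w - f w) - (g z - f z)‖ ≤ ‖g w - f w‖ + ‖g z - f z‖ := norm_sub_le _ _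
            _ < η + η := add_lt_add (hhK w (hball hw)) (hhK z (hzK z hz))
            _ = 2 * η := by ring
          exact Complex.norm_deriv_le_div_of_mapsTo_ball hdiff (hmaps.mono_right ball_subset_closedBall) hr0)
        (convex_closedBall _ _) hxC hyC
      exact this
    have heq : f y - f x = -((g y - f y) - (g x - f x)) := by
      rw [hgxy]; ring
    have hnx : (0:ℝ) < ‖y - x‖ := by
      rw [norm_sub_pos_iff]; exact fun hxy' => hxy hxy'.symm
    rw [heq, norm_neg] at hflow
    have h4 : (2 * η / r) * ‖y - x‖ ≤ (m / 2) * ‖y - x‖ := by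
      apply mul_le_mul_of_nonneg_right _ (norm_nonneg _)
      rw [div_le_iff₀ hr0]; nlinarith
    nlinarith
  · -- far pairs
    have hfxy : c ≤ ‖f x - f y‖ := hcmin x hx y hy hfar
    have h1 : ‖g x - f x‖ < η := hgf x (interior_subset (hK'K hx))
    have h2 : ‖g y - f y‖ < η := hgf y (interior_subset (hK'K hy))
    have h3 : ‖f x - f y‖ ≤ ‖g x - f x‖ + ‖g y - f y‖ := by
      have he : f x - f y = (g y - f y) - (g x - f x) := by rw [hgxy]; ring
      rw [he]
      exact (norm_sub_le _ _).trans (by rw [add_comm])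
    have hη : η ≤ c / 3 := min_le_left _ _
    linarith
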